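/- Feynman parameterization: let n ≥ 2 and let a₁, …, a_n be positive real numbers. Then 1/(a₁·a₂·⋯·a_n) = (n−1)! · ∫_T ( Σ_{i=1}^{n−1} a_i x_i + a_n·(1 − Σ_{i=1}^{n−1} x_i) )^{−n} dx, where the integral is over the simplex T = { x ∈ ℝ^{n−1} : x_i ≥ 0 for all i and Σ_{i=1}^{n−1} x_i ≤ 1 } with respect to (n−1)-dimensional Lebesgue measure. -/

import Mathlib

open MeasureTheory Finset

namespace Feyn

def T (n : ℕ) : Set (Fin n → ℝ) := {x | (∀ i, 0 ≤ x i) ∧ ∑ i, x i ≤ 1}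

noncomputable def L {n : ℕ} (a : Fin (n + 1) → ℝ) (x : Fin n → ℝ) : ℝ :=
  (∑ i : Fin n, a i.castSucc * x i) + a (Fin.last n) * (1 - ∑ i, x i)

lemma measurableSet_T (n : ℕ) : MeasurableSet (T n) := by
  have : T n = (⋂ i, {x : Fin n → ℝ | 0 ≤ x i}) ∩ {x | ∑ i, x i ≤ 1} := by
    ext x; simp [T, Set.mem_iInter]
  rw [this]
  exact (MeasurableSet.iInter fun i =>
    measurableSet_le measurable_const (measurable_pi_apply i)).inter
    (measurableSet_le (Finset.measurable_sum _ fun i _ => measurable_pi_apply i) measurable_const)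

lemma T_subset (n : ℕ) : T n ⊆ Set.pi Set.univ fun _ : Fin n => Set.Icc (0:ℝ) 1 := by
  rintro x ⟨h0, h1⟩ i _
  exact ⟨h0 i, le_trans (Finset.single_le_sum (fun j _ => h0 j) (mem_univ i)) h1⟩

lemma volume_T_ne_top (n : ℕ) : volume (T n) ≠ ⊤ := by
  refine ne_top_of_le_ne_top ?_ (measure_mono (T_subset n))
  rw [volume_pi_pi]
  simp

lemma continuous_L {n : ℕ} (a : Fin (n + 1) → ℝ) : Continuous (L a) := by
  unfold L; fun_prop

lemma L_ge {n : ℕ} (a : Fin (n + 1) → ℝ) {m : ℝ} (hm : ∀ i, m ≤ a i) {x : Fin n → ℝ}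
    (hx : x ∈ T n) : m ≤ L a x := by
  obtain ⟨h0, h1⟩ := hx
  have : m * (∑ i, x i) + m * (1 - ∑ i, x i) ≤ L a x := by
    unfold L
    rw [Finset.mul_sum]
    exact add_le_add
      (Finset.sum_le_sum fun i _ => mul_le_mul_of_nonneg_right (hm _) (h0 i))
      (mul_le_mul_of_nonneg_right (hm _) (by linarith))
  linarith

lemma L_lb {n : ℕ} {a : Fin (n + 1) → ℝ} (ha : ∀ i, 0 < a i) :
    ∃ m : ℝ, 0 < m ∧ ∀ x ∈ T n, m ≤ L a x := by
  refine ⟨univ.inf' univ_nonempty a, ?_,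
    fun x hx => L_ge a (fun i => Finset.inf'_le a (mem_univ i)) hx⟩
  rw [Finset.lt_inf'_iff]
  exact fun i _ => ha i

lemma L_pos {n : ℕ} {a : Fin (n + 1) → ℝ} (ha : ∀ i, 0 < a i) {x : Fin n → ℝ}
    (hx : x ∈ T n) : 0 < L a x := by
  obtain ⟨m, hm, hmL⟩ := L_lb ha
  exact lt_of_lt_of_le hm (hmL x hx)

lemma measurable_Lzpow {n : ℕ} (a : Fin (n + 1) → ℝ) (q : ℕ) :
    Measurable fun x => L a x ^ (-(q : ℤ)) := by
  simp_rw [zpow_neg, zpow_natCast]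
  exact ((continuous_L a).measurable.pow_const q).inv

lemma norm_Lzpow_le {n : ℕ} {a : Fin (n + 1) → ℝ} {m : ℝ} (hm : 0 < m)
    (q : ℕ) {x : Fin n → ℝ} (hx : m ≤ L a x) :
    ‖L a x ^ (-(q : ℤ))‖ ≤ (m ^ q)⁻¹ := by
  have h1 : 0 < L a x := lt_of_lt_of_le hm hx
  rw [Real.norm_eq_abs, abs_of_nonneg (zpow_nonneg h1.le _), zpow_neg, zpow_natCast]
  gcongr


lemma integrableOn_Lzpow {n : ℕ} {a : Fin (n + 1) → ℝ} (ha : ∀ i, 0 < a i) (q : ℕ) :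
    IntegrableOn (fun x => L a x ^ (-(q : ℤ))) (T n) := by
  obtain ⟨m, hm, hmL⟩ := L_lb ha
  refine Measure.integrableOn_of_bounded (volume_T_ne_top n)
    (measurable_Lzpow a q).aestronglyMeasurable (M := (m ^ q)⁻¹) ?_
  filter_upwards [ae_restrict_mem (measurableSet_T n)] with x hx
  exact norm_Lzpow_le hm q (hmL x hx)

lemma peel {n : ℕ} (F : (Fin (n + 1) → ℝ) → ℝ) (hF : Measurable F)
    {C : ℝ} (hC : ∀ x ∈ T (n + 1), ‖F x‖ ≤ C) :
    ∫ x in T (n + 1), F x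
      = ∫ y in T n, ∫ t in Set.Icc 0 (1 - ∑ i, y i), F (Fin.cons t y) := by
  classical
  set e := MeasurableEquiv.piFinSuccAbove (fun _ : Fin (n + 1) => ℝ) 0 with he
  have hsymm : ∀ (t : ℝ) (y : Fin n → ℝ), e.symm (t, y) = Fin.cons t y := by
    intro t y
    simp [he, MeasurableEquiv.piFinSuccAbove, Fin.insertNth_zero']
    rfl
  have mp : MeasurePreserving e.symm volume volume :=
    (volume_preserving_piFinSuccAbove (fun _ : Fin (n + 1) => ℝ) 0).symm
  have key := mp.setIntegral_preimage_emb e.symm.measurableEmbedding F (T (n + 1))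
  set A : Set (ℝ × (Fin n → ℝ)) :=
    {p : ℝ × (Fin n → ℝ) | p.2 ∈ T n ∧ p.1 ∈ Set.Icc 0 (1 - ∑ i, p.2 i)} with hAdef
  have hA : e.symm ⁻¹' T (n + 1) = A := by
    ext ⟨t, y⟩
    simp only [Set.mem_preimage, hsymm, T, Set.mem_setOf_eq, Fin.forall_fin_succ,
      Fin.cons_zero, Fin.cons_succ, Fin.sum_cons, Set.mem_Icc, hAdef]
    constructor
    · rintro ⟨⟨ht, hy⟩, hs⟩
      exact ⟨⟨hy, by linarith⟩, ht, by linarith⟩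
    · rintro ⟨⟨hy, _⟩, ht, hts⟩
      exact ⟨⟨ht, hy⟩, by linarith⟩
  have hAmeas : MeasurableSet A := hA ▸ e.symm.measurable (measurableSet_T _)
  have hAfin : volume A ≠ ⊤ := by
    have hsub : A ⊆ (Set.Icc (0:ℝ) 1) ×ˢ Set.pi Set.univ fun _ : Fin n => Set.Icc (0:ℝ) 1 := by
      rintro ⟨t, y⟩ ⟨hy, ht0, ht1⟩
      have h0 : (0:ℝ) ≤ ∑ i, y i := Finset.sum_nonneg fun i _ => hy.1 i
      exact ⟨⟨ht0, by linarith⟩, T_subset n hy⟩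
    refine ne_top_of_le_ne_top ?_ (measure_mono hsub)
    rw [Measure.volume_eq_prod, Measure.prod_prod, volume_pi_pi]
    simp
  have hGmeas : Measurable fun p : ℝ × (Fin n → ℝ) => F (e.symm p) :=
    hF.comp e.symm.measurable
  have hInt : Integrable (A.indicator fun p => F (e.symm p)) volume := by
    rw [integrable_indicator_iff hAmeas]
    refine Measure.integrableOn_of_bounded hAfin hGmeas.aestronglyMeasurable (M := C) ?_
    filter_upwards [ae_restrict_mem hAmeas] with p hp
    exact hC _ (by rw [← hA] at hp; exact hp)
  have hinner : ∀ y : Fin n → ℝ,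
      (∫ t, A.indicator (fun p => F (e.symm p)) (t, y))
        = (T n).indicator (fun y => ∫ t in Set.Icc 0 (1 - ∑ i, y i), F (Fin.cons t y)) y := by
    intro y
    by_cases hy : y ∈ T n
    · have h1 : ∀ t : ℝ, A.indicator (fun p => F (e.symm p)) (t, y)
          = (Set.Icc 0 (1 - ∑ i, y i)).indicator (fun t => F (Fin.cons t y)) t := by
        intro t
        by_cases ht : t ∈ Set.Icc (0:ℝ) (1 - ∑ i, y i)
        · rw [Set.indicator_of_mem (by exact ⟨hy, ht⟩) _, Set.indicator_of_mem ht, hsymm]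
        · rw [Set.indicator_of_notMem (fun hmem => ht hmem.2) _, Set.indicator_of_notMem ht]
      simp_rw [h1]
      rw [integral_indicator measurableSet_Icc, Set.indicator_of_mem hy]
    · have h1 : ∀ t : ℝ, A.indicator (fun p => F (e.symm p)) (t, y) = 0 := by
        intro t
        exact Set.indicator_of_notMem (fun hmem => hy hmem.1) _
      simp_rw [h1]
      rw [Set.indicator_of_notMem hy, integral_zero]
  rw [← key, hA, ← integral_indicator hAmeas]
  rw [Measure.volume_eq_prod, integral_prod_symm _ (by rwa [Measure.volume_eq_prod] at hInt)]
  simp_rw [hinner]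
  rw [integral_indicator (measurableSet_T n)]

lemma integral_sub_pow {c : ℝ} (hc : 0 ≤ c) (m : ℕ) :
    ∫ t in Set.Icc 0 c, (c - t) ^ m = c ^ (m + 1) / (m + 1) := by
  rw [integral_Icc_eq_integral_Ioc, ← intervalIntegral.integral_of_le hc,
    intervalIntegral.integral_comp_sub_left (fun x => x ^ m) c]
  simp [integral_pow]

lemma T_zero : T 0 = Set.univ := by
  ext x; simp [T]

lemma volume_univ_fin_zero : volume (Set.univ : Set (Fin 0 → ℝ)) = 1 := by
  have : (Set.univ : Set (Fin 0 → ℝ)) = Set.pi Set.univ (fun _ => Set.univ) := by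
    simp
  rw [this, volume_pi_pi]
  simp

lemma J : ∀ n m : ℕ, (∫ x in T n, (1 - ∑ i, x i) ^ m) = (m.factorial : ℝ) / ((m + n).factorial) := by
  intro n
  induction n with
  | zero =>
    intro m
    rw [T_zero]
    simp only [Finset.univ_eq_empty, Finset.sum_empty, sub_zero, one_pow]
    rw [setIntegral_const, measureReal_def, volume_univ_fin_zero]
    simp [Nat.factorial_ne_zero, eq_comm, div_self]
  | succ n ih =>
    intro m
    have hmeas : Measurable fun x : Fin (n + 1) → ℝ => (1 - ∑ i, x i) ^ m := by fun_prop
    have hbd : ∀ x ∈ T (n + 1), ‖(1 - ∑ i, x i) ^ m‖ ≤ 1 := by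
      intro x hx
      obtain ⟨h0, h1⟩ := hx
      have h0' : (0:ℝ) ≤ ∑ i, x i := Finset.sum_nonneg fun i _ => h0 i
      rw [Real.norm_eq_abs, abs_pow]
      calc |1 - ∑ i, x i| ^ m ≤ 1 ^ m := by
            gcongr
            rw [abs_le]; constructor <;> linarith
        _ = 1 := one_pow m
    rw [peel _ hmeas hbd]
    rw [setIntegral_congr_fun (measurableSet_T n) (g := fun y : Fin n → ℝ =>
        (1 - ∑ i, y i) ^ (m + 1) / (m + 1)) ?_]
    · rw [integral_div, ih (m + 1)]
      rw [show m + 1 + n = m + (n + 1) by omega]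
      rw [Nat.factorial_succ]
      have h1 : ((m + (n + 1)).factorial : ℝ) ≠ 0 := Nat.cast_ne_zero.mpr (Nat.factorial_ne_zero _)
      have h2 : ((m:ℝ) + 1) ≠ 0 := by positivity
      field_simp
      push_cast; ring
    · intro y hy
      have hc : (0:ℝ) ≤ 1 - ∑ i, y i := by
        obtain ⟨h0, h1⟩ := hy; linarith
      have : ∀ t : ℝ, (1 - ∑ i, Fin.cons t y i) ^ m = ((1 - ∑ i, y i) - t) ^ m := by
        intro t
        rw [Fin.sum_cons]
        ring_nf
      simp_rw [this]
      rw [integral_sub_pow hc m]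

lemma key_integral (p : ℕ) {A b c : ℝ} (hA : 0 < A) (hAc : 0 < A + b * c) (hb : b ≠ 0)
    (hc : 0 ≤ c) :
    ∫ t in Set.Icc 0 c, (A + b * t) ^ (-((p : ℤ) + 2))
      = (A ^ (-((p : ℤ) + 1)) - (A + b * c) ^ (-((p : ℤ) + 1))) / (((p : ℝ) + 1) * b) := by
  have hpos : ∀ t ∈ Set.uIcc (0:ℝ) c, 0 < A + b * t := by
    intro t ht
    rw [Set.uIcc_of_le hc, Set.mem_Icc] at ht
    rcases le_or_gt 0 b with hb' | hb'
    · nlinarith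
    · nlinarith
  set f : ℝ → ℝ := fun t => (A + b * t) ^ (-((p : ℤ) + 1)) * (-(((p : ℝ) + 1) * b))⁻¹ with hf
  have hderiv : ∀ t ∈ Set.uIcc (0:ℝ) c,
      HasDerivAt f ((A + b * t) ^ (-((p : ℤ) + 2))) t := by
    intro t ht
    have h1 : HasDerivAt (fun t : ℝ => A + b * t) b t := by
      simpa using ((hasDerivAt_id t).const_mul b).const_add A
    have h2 := (hasDerivAt_zpow (-((p : ℤ) + 1)) (A + b * t) (Or.inl (hpos t ht).ne')).comp t h1
    have h3 := h2.mul_const (-(((p : ℝ) + 1) * b))⁻¹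
    refine h3.congr_deriv ?_
    have he : -((p : ℤ) + 1) - 1 = -((p : ℤ) + 2) := by ring
    rw [he]
    have hb1 : (((p:ℝ) + 1) * b) ≠ 0 := mul_ne_zero (by positivity) hb
    push_cast
    field_simp
  have hint : IntervalIntegrable (fun t => (A + b * t) ^ (-((p : ℤ) + 2))) volume 0 c := by
    apply ContinuousOn.intervalIntegrable
    exact (((continuous_const.add (continuous_const.mul continuous_id)).continuousOn).zpow₀
      _ (fun t ht => Or.inl (hpos t ht).ne'))
  rw [integral_Icc_eq_integral_Ioc, ← intervalIntegral.integral_of_le hc,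
    intervalIntegral.integral_eq_sub_of_hasDerivAt hderiv hint]
  rw [hf]
  simp only [mul_zero, add_zero]
  have hb1 : (((p:ℝ) + 1) * b) ≠ 0 := by
    apply mul_ne_zero _ hb
    positivity
  field_simp
  ring

lemma L_cons {n : ℕ} (a : Fin (n + 2) → ℝ) (t : ℝ) (y : Fin n → ℝ) :
    L a (Fin.cons t y) = L (fun i => a i.succ) y + (a 0 - a (Fin.last (n + 1))) * t := by
  unfold L
  rw [Fin.sum_univ_succ, Fin.sum_cons]
  simp only [Fin.cons_zero, Fin.cons_succ, Fin.succ_last, Fin.succ_castSucc, Fin.castSucc_zero]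
  ring

lemma L_update {n : ℕ} (a : Fin (n + 1) → ℝ) (v : ℝ) (y : Fin n → ℝ) :
    L (Function.update a (Fin.last n) v) y
      = (∑ i : Fin n, a i.castSucc * y i) + v * (1 - ∑ i, y i) := by
  unfold L
  rw [Function.update_self]
  congr 1
  apply Finset.sum_congr rfl
  intro i _
  rw [Function.update_of_ne (Fin.castSucc_lt_last i).ne]

lemma step {n : ℕ}
    (ih : ∀ a : Fin (n + 1) → ℝ, (∀ i, 0 < a i) →
      1 / (∏ i, a i) = (n.factorial : ℝ) * ∫ x in T n, L a x ^ (-((n + 1 : ℕ) : ℤ)))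
    (a : Fin (n + 2) → ℝ) (ha : ∀ i, 0 < a i) (hne : a 0 ≠ a (Fin.last (n + 1))) :
    1 / (∏ i, a i)
      = ((n + 1).factorial : ℝ) * ∫ x in T (n + 1), L a x ^ (-((n + 2 : ℕ) : ℤ)) := by
  classical
  set a' : Fin (n + 1) → ℝ := fun i => a i.succ with ha'def
  set a'' := Function.update a' (Fin.last n) (a 0) with ha''def
  have ha'pos : ∀ i, 0 < a' i := fun i => ha _
  have ha''pos : ∀ i, 0 < a'' i := by
    intro i
    by_cases h : i = Fin.last n
    · rw [ha''def, h, Function.update_self]; exact ha 0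
    · rw [ha''def, Function.update_of_ne h]; exact ha'pos i
  set b := a 0 - a (Fin.last (n + 1)) with hbdef
  have hb : b ≠ 0 := sub_ne_zero.mpr hne
  have ha'last : a' (Fin.last n) = a (Fin.last (n + 1)) := by
    rw [ha'def]; simp [Fin.succ_last]
  have hL'' : ∀ y : Fin n → ℝ, L a'' y = L a' y + b * (1 - ∑ i, y i) := by
    intro y
    rw [ha''def, L_update]
    unfold L
    rw [ha'last, hbdef]
    ring
  -- peeling
  obtain ⟨m, hm, hmL⟩ := L_lb ha
  have hpeel := peel (fun x => L a x ^ (-((n + 2 : ℕ) : ℤ))) (measurable_Lzpow a (n + 2))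
    (C := (m ^ (n + 2))⁻¹) (fun x hx => norm_Lzpow_le hm (n + 2) (hmL x hx))
  rw [hpeel]
  -- inner integral
  rw [setIntegral_congr_fun (measurableSet_T n) (g := fun y : Fin n → ℝ =>
      (L a' y ^ (-((n + 1 : ℕ) : ℤ)) - L a'' y ^ (-((n + 1 : ℕ) : ℤ)))
        * ((((n : ℝ) + 1) * b))⁻¹) ?_]
  swap
  · intro y hy
    have hA : 0 < L a' y := L_pos ha'pos hy
    have hc : (0:ℝ) ≤ 1 - ∑ i, y i := by obtain ⟨h0, h1⟩ := hy; linarith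
    have hAc : 0 < L a' y + b * (1 - ∑ i, y i) := by
      rw [← hL'' y]; exact L_pos ha''pos hy
    simp only
    simp_rw [L_cons a, ← ha'def, ← hbdef]
    rw [show (-((n + 2 : ℕ) : ℤ)) = -((n : ℤ) + 2) by push_cast; ring]
    rw [key_integral n hA hAc hb hc, ← hL'' y]
    rw [show (-((n : ℤ) + 1)) = -((n + 1 : ℕ) : ℤ) by push_cast; ring]
    rw [div_eq_mul_inv]
  -- pull out constants and use IH
  rw [integral_mul_const, integral_sub (integrableOn_Lzpow ha'pos (n + 1))
    (integrableOn_Lzpow ha''pos (n + 1))]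
  have e1 := ih a' ha'pos
  have e2 := ih a'' ha''pos
  have hP : ∏ i, a i = a 0 * ∏ i, a' i := by
    rw [Fin.prod_univ_succ]
  have hP'' : a (Fin.last (n + 1)) * ∏ i, a'' i = a 0 * ∏ i, a' i := by
    rw [ha''def, Finset.prod_update_of_mem (Finset.mem_univ (Fin.last n)),
      Finset.prod_eq_mul_prod_sdiff_singleton_of_mem (Finset.mem_univ (Fin.last n)) a', ha'last]
    ring
  have hP'pos : 0 < ∏ i, a' i := Finset.prod_pos fun i _ => ha'pos i
  have hP''pos : 0 < ∏ i, a'' i := Finset.prod_pos fun i _ => ha''pos i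
  have hfacpos : 0 < (n.factorial : ℝ) := by exact_mod_cast Nat.factorial_pos n
  have e1' : (∏ i, a' i) * ((n.factorial : ℝ) * ∫ x in T n, L a' x ^ (-((n + 1 : ℕ) : ℤ))) = 1 := by
    rw [← e1]; field_simp
  have e2' : (∏ i, a'' i) * ((n.factorial : ℝ) * ∫ x in T n, L a'' x ^ (-((n + 1 : ℕ) : ℤ))) = 1 := by
    rw [← e2]; field_simp
  have hfact : (((n + 1).factorial : ℕ) : ℝ) = ((n : ℝ) + 1) * (n.factorial : ℝ) := by
    rw [Nat.factorial_succ]; push_cast; ring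
  rw [hfact]
  set F1 := ∫ x in T n, L a' x ^ (-((n + 1 : ℕ) : ℤ)) with hF1
  set F2 := ∫ x in T n, L a'' x ^ (-((n + 1 : ℕ) : ℤ)) with hF2
  have hn1 : ((n : ℝ) + 1) ≠ 0 := by positivity
  have ha0 : a 0 ≠ 0 := (ha 0).ne'
  have halast : a (Fin.last (n + 1)) ≠ 0 := (ha _).ne'
  have hF1v : F1 = 1 / ((n.factorial : ℝ) * ∏ i, a' i) := by
    rw [eq_div_iff (mul_ne_zero hfacpos.ne' hP'pos.ne')]
    linear_combination e1'
  have hF2v : F2 = 1 / ((n.factorial : ℝ) * ∏ i, a'' i) := by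
    rw [eq_div_iff (mul_ne_zero hfacpos.ne' hP''pos.ne')]
    linear_combination e2'
  have hPne : (∏ i, a i) ≠ 0 := (Finset.prod_pos fun i _ => ha i).ne'
  rw [hF1v, hF2v]
  have hP''ne : (∏ i, a'' i) ≠ 0 := hP''pos.ne'
  have hfacne : (n.factorial : ℝ) ≠ 0 := hfacpos.ne'
  have hP' : ∏ i, a' i = a (Fin.last (n + 1)) * (∏ i, a'' i) / a 0 := by
    rw [hP'']; field_simp
  have hd : a 0 - a (Fin.last (n + 1)) ≠ 0 := sub_ne_zero.mpr hne
  rw [hP, hP', hbdef]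
  field_simp

lemma integral_L_comp {N : ℕ} (a : Fin (N + 1) → ℝ) (τ : Equiv.Perm (Fin (N + 1)))
    (π : Equiv.Perm (Fin N)) (hcomm : ∀ i : Fin N, τ i.castSucc = (π i).castSucc)
    (hlast : τ (Fin.last N) = Fin.last N) (q : ℕ) :
    ∫ x in T N, L (a ∘ τ) x ^ (-(q : ℤ)) = ∫ x in T N, L a x ^ (-(q : ℤ)) := by
  have hLcomp : ∀ x : Fin N → ℝ, L (a ∘ τ) x = L a (fun i => x (π.symm i)) := by
    intro x
    unfold L
    simp only [Function.comp_apply, hlast, hcomm]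
    congr 1
    · exact Fintype.sum_equiv π _ _ fun i => by rw [Equiv.symm_apply_apply]
    · congr 2
      exact (Equiv.sum_comp π.symm x).symm
  set g := MeasurableEquiv.piCongrLeft (fun _ : Fin N => ℝ) π with hgdef
  have hg : ∀ (x : Fin N → ℝ) (i : Fin N), g x i = x (π.symm i) := by
    intro x i
    show (MeasurableEquiv.piCongrLeft (fun _ : Fin N => ℝ) π) x i = _
    rw [MeasurableEquiv.coe_piCongrLeft]
    have := Equiv.piCongrLeft_apply_apply (P := fun _ : Fin N => ℝ) (e := π) x (π.symm i)
    rwa [Equiv.apply_symm_apply] at this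
  have hmp : MeasurePreserving g volume volume :=
    volume_measurePreserving_piCongrLeft _ π
  have key := hmp.setIntegral_preimage_emb g.measurableEmbedding
    (fun x => L a x ^ (-(q : ℤ))) (T N)
  have hpre : ⇑g ⁻¹' T N = T N := by
    ext x
    simp only [Set.mem_preimage, T, Set.mem_setOf_eq]
    have hsum : ∑ i, g x i = ∑ i, x i := by
      simp_rw [hg]
      exact Equiv.sum_comp π.symm x
    constructor
    · rintro ⟨h0, h1⟩
      refine ⟨fun i => ?_, by rwa [hsum] at h1⟩
      have := h0 (π i)
      rwa [hg, Equiv.symm_apply_apply] at this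
    · rintro ⟨h0, h1⟩
      exact ⟨fun i => by rw [hg]; exact h0 _, by rwa [hsum]⟩
  rw [← key, hpre]
  apply setIntegral_congr_fun (measurableSet_T N)
  intro x _
  simp only
  rw [hLcomp x]
  exact congrArg (· ^ (-(q:ℤ))) (congrArg (L a) (funext fun i => (hg x i).symm))

lemma main : ∀ (n : ℕ) (a : Fin (n + 1) → ℝ), (∀ i, 0 < a i) →
    1 / (∏ i, a i) = (n.factorial : ℝ) * ∫ x in T n, L a x ^ (-((n + 1 : ℕ) : ℤ)) := by
  intro n
  induction n with
  | zero =>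
    intro a ha
    have hL : ∀ x : Fin 0 → ℝ, L a x = a 0 := by
      intro x
      unfold L
      simp [Fin.last]
    simp_rw [hL]
    rw [T_zero, setIntegral_const, measureReal_def, volume_univ_fin_zero]
    simp [Fin.prod_univ_one, zpow_neg, (ha 0).ne']
  | succ n ih =>
    intro a ha
    by_cases hall : ∀ j : Fin (n + 1), a j.castSucc = a (Fin.last (n + 1))
    · -- all coefficients equal
      have hall' : ∀ i : Fin (n + 2), a i = a (Fin.last (n + 1)) := by
        intro i
        induction i using Fin.lastCases with
        | last => rfl
        | cast j => exact hall j
      have hLconst : ∀ x : Fin (n + 1) → ℝ, L a x = a (Fin.last (n + 1)) := by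
        intro x
        unfold L
        rw [Finset.sum_congr rfl fun i _ => by rw [hall' i.castSucc]]
        rw [← Finset.mul_sum]
        ring
      simp_rw [hLconst]
      rw [setIntegral_const]
      have hvol : volume.real (T (n + 1)) = 1 / (((n + 1).factorial : ℕ) : ℝ) := by
        have hJ := J (n + 1) 0
        simp only [pow_zero, Nat.factorial_zero, Nat.cast_one, Nat.zero_add, zero_add] at hJ
        rw [setIntegral_const, smul_eq_mul, mul_one] at hJ
        rw [hJ, one_div]
      have hprod : ∏ i, a i = a (Fin.last (n + 1)) ^ (n + 2) := by
        rw [Finset.prod_congr rfl fun i _ => hall' i, Finset.prod_const]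
        simp
      rw [hprod, hvol, smul_eq_mul]
      have hfne : (((n + 1).factorial : ℕ) : ℝ) ≠ 0 := Nat.cast_ne_zero.mpr (Nat.factorial_ne_zero _)
      have hane : a (Fin.last (n + 1)) ≠ 0 := (ha _).ne'
      rw [show ((n + 1 + 1 : ℕ) : ℤ) = ((n + 2 : ℕ) : ℤ) by push_cast; ring]
      rw [zpow_neg, zpow_natCast]
      field_simp
    · push_neg at hall
      obtain ⟨j, hj⟩ := hall
      set τ : Equiv.Perm (Fin (n + 2)) := Equiv.swap 0 j.castSucc with hτ
      set π : Equiv.Perm (Fin (n + 1)) := Equiv.swap 0 j with hπ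
      have hcomm : ∀ i : Fin (n + 1), τ i.castSucc = (π i).castSucc := by
        intro i
        rw [hτ, hπ, show (0 : Fin (n + 2)) = Fin.castSucc 0 by simp]
        exact (Fin.castSucc_injective (n + 1)).swap_apply 0 j i
      have hτlast : τ (Fin.last (n + 1)) = Fin.last (n + 1) := by
        rw [hτ]
        apply Equiv.swap_apply_of_ne_of_ne
        · simp [Fin.ext_iff]
        · exact (Fin.castSucc_lt_last j).ne'
      have hne : (a ∘ τ) 0 ≠ (a ∘ τ) (Fin.last (n + 1)) := by
        simp only [Function.comp_apply, hτlast, hτ, Equiv.swap_apply_left]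
        rwa [← hτ, hτlast]
      have happ := step ih (a ∘ τ) (fun i => ha _) hne
      rw [integral_L_comp a τ π hcomm hτlast (n + 2)] at happ
      rw [show ∏ i, (a ∘ τ) i = ∏ i, a i from Equiv.prod_comp τ a] at happ
      rw [show ((n + 1 + 1 : ℕ) : ℤ) = ((n + 2 : ℕ) : ℤ) by push_cast; ring]
      exact happ

end Feyn

/-- Feynman parameterization: for positive reals `a₁, …, a_n` (here `n = k + 2 ≥ 2`),
`1/(a₁⋯a_n) = (n−1)! ∫_T (Σ_{i<n} a_i x_i + a_n(1 − Σ_{i<n} x_i))^{−n} dx`, the integral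
taken over the standard simplex `T ⊆ ℝ^{n−1}` with respect to Lebesgue measure. -/
theorem stmt14 (k : ℕ) (a : Fin (k + 2) → ℝ) (ha : ∀ i, 0 < a i) :
    1 / (∏ i, a i)
      = (Nat.factorial (k + 1) : ℝ) *
        ∫ x in {x : Fin (k + 1) → ℝ | (∀ i, 0 ≤ x i) ∧ (∑ i, x i) ≤ 1},
          ((∑ i : Fin (k + 1), a i.castSucc * x i)
            + a (Fin.last (k + 1)) * (1 - ∑ i, x i)) ^ (-(k + 2 : ℤ)) := by
  have h := Feyn.main (k + 1) a ha
  rw [show ((k + 1 + 1 : ℕ) : ℤ) = ((k : ℤ) + 2) by push_cast; ring] at h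
  exact h
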